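/- Let n ≥ 3 and let f = (f_0, …, f_n) be given by f_k = a_0^{n−k} b_0^k + a_1^{n−k} b_1^k, where v_0 = (a_0, b_0) and v_1 = (a_1, b_1) are linearly independent vectors in ℂ². If a_0 a_1 + b_0 b_1 = 0 (i.e., θ(f) = 0), then there exist a matrix H ∈ O₂(ℂ), a nonzero k ∈ ℂ satisfying a_1 = k·b_0 and b_1 = −k·a_0, and a nonzero λ ∈ ℂ, such that for all 0 ≤ j ≤ n: (Hv_0)_0^{n−j}(Hv_0)_1^j + (Hv_1)_0^{n−j}(Hv_1)_1^j = λ·(1 + k^n·(−1)^j), i.e., H^{⊗n} f = λ·((1,1)^{⊗n} + k^n·(1,−1)^{⊗n}). -/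

import Mathlib

/-- **Normal form when `θ(f) = 0`.**
Let `f = v₀^{⊗n} + v₁^{⊗n}` with `v₀ = (a₀, b₀)`, `v₁ = (a₁, b₁)` linearly independent
and `n ≥ 3`. If `a₀ a₁ + b₀ b₁ = 0` (i.e. `θ(f) = 0`), then there exist `H ∈ O₂(ℂ)`, a
nonzero `k` with `a₁ = k b₀` and `b₁ = −k a₀`, and a nonzero `λ` such that
`H^{⊗n} f = λ ((1,1)^{⊗n} + kⁿ (1,−1)^{⊗n})`, entrywise:
`(Hv₀)₀^{n−j} (Hv₀)₁^j + (Hv₁)₀^{n−j} (Hv₁)₁^j = λ (1 + kⁿ (−1)^j)` for all `j ≤ n`. -/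
theorem stmt_13 (n : ℕ) (hn : 3 ≤ n) (a₀ b₀ a₁ b₁ : ℂ)
    (hli : LinearIndependent ℂ ![(a₀, b₀), (a₁, b₁)]) (f : ℕ → ℂ)
    (hf : ∀ k ≤ n, f k = a₀ ^ (n - k) * b₀ ^ k + a₁ ^ (n - k) * b₁ ^ k)
    (hθ : a₀ * a₁ + b₀ * b₁ = 0) :
    ∃ (H : Matrix (Fin 2) (Fin 2) ℂ) (k lam : ℂ),
      H.transpose * H = 1 ∧ k ≠ 0 ∧ a₁ = k * b₀ ∧ b₁ = -k * a₀ ∧ lam ≠ 0 ∧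
      ∀ j ≤ n,
        H.mulVec ![a₀, b₀] 0 ^ (n - j) * H.mulVec ![a₀, b₀] 1 ^ j +
          H.mulVec ![a₁, b₁] 0 ^ (n - j) * H.mulVec ![a₁, b₁] 1 ^ j =
        lam * (1 + k ^ n * (-1) ^ j) := by
  have hdep : ∀ c d : ℂ, c * a₀ + d * a₁ = 0 → c * b₀ + d * b₁ = 0 → c = 0 ∧ d = 0 := by
    intro c d h1 h2
    have := (Fintype.linearIndependent_iff.mp hli) ![c, d] ?_
    · exact ⟨this 0, this 1⟩
    · simp [Fin.sum_univ_two, Prod.ext_iff, smul_eq_mul]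
      exact ⟨h1, h2⟩
  have hv0 : ¬(a₀ = 0 ∧ b₀ = 0) := by
    rintro ⟨h1, h2⟩
    have := hdep 1 0 (by simp [h1]) (by simp [h2])
    simp at this
  have hD : a₁ * b₀ - a₀ * b₁ ≠ 0 := by
    intro h
    by_cases ha : a₀ = 0
    · have hb : b₀ ≠ 0 := fun hb => hv0 ⟨ha, hb⟩
      have := hdep b₁ (-b₀) (by linear_combination -h) (by ring)
      exact hb (neg_eq_zero.mp this.2)
    · have := hdep a₁ (-a₀) (by ring) (by linear_combination h)
      exact ha (neg_eq_zero.mp this.2)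
  have hs : a₀ ^ 2 + b₀ ^ 2 ≠ 0 := by
    intro h
    have ha : a₀ ≠ 0 := by
      intro ha
      have hb : b₀ = 0 := by
        have : b₀ ^ 2 = 0 := by linear_combination h - a₀ * ha
        exact pow_eq_zero_iff (by norm_num) |>.mp this
      exact hv0 ⟨ha, hb⟩
    apply hD
    have : a₀ * (a₁ * b₀ - a₀ * b₁) = 0 := by linear_combination b₀ * hθ - b₁ * h
    rcases mul_eq_zero.mp this with h' | h'
    · exact absurd h' ha
    · exact h'
  obtain ⟨μ, hμ⟩ : ∃ μ : ℂ, μ ^ 2 = (a₀ ^ 2 + b₀ ^ 2) / 2 :=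
    IsAlgClosed.exists_pow_nat_eq _ (n := 2) (by norm_num)
  have hμ0 : μ ≠ 0 := by
    intro h
    rw [h] at hμ
    field_simp at hμ
    exact hs (by simpa using hμ.symm)
  have hμ2 : μ ^ 2 * 2 = a₀ ^ 2 + b₀ ^ 2 := by rw [hμ]; ring
  set k : ℂ := (a₁ * b₀ - a₀ * b₁) / (a₀ ^ 2 + b₀ ^ 2) with hkdef
  set c : ℂ := μ / (a₀ ^ 2 + b₀ ^ 2) with hcdef
  have hc : c * c * (2 * (a₀ ^ 2 + b₀ ^ 2)) = 1 := by
    rw [hcdef]; field_simp; linear_combination hμ2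
  set H : Matrix (Fin 2) (Fin 2) ℂ :=
    !![c * (a₀ + b₀), c * (b₀ - a₀); c * (a₀ - b₀), c * (a₀ + b₀)] with hHdef
  have hk1 : a₁ = k * b₀ := by
    rw [hkdef]; field_simp; linear_combination a₀ * hθ
  have hk2 : b₁ = -k * a₀ := by
    rw [hkdef]; field_simp; linear_combination b₀ * hθ
  have hk0 : k ≠ 0 := div_ne_zero hD hs
  refine ⟨H, k, μ ^ n, ?_, hk0, hk1, hk2, pow_ne_zero n hμ0, ?_⟩
  · rw [hHdef, show (!![c * (a₀ + b₀), c * (b₀ - a₀); c * (a₀ - b₀), c * (a₀ + b₀)] :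
        Matrix (Fin 2) (Fin 2) ℂ).transpose
        = !![c * (a₀ + b₀), c * (a₀ - b₀); c * (b₀ - a₀), c * (a₀ + b₀)] from by
      ext i j; fin_cases i <;> fin_cases j <;> rfl]
    ext i j
    fin_cases i <;> fin_cases j <;>
      simp [Matrix.mul_apply, Fin.sum_univ_two, Matrix.one_apply] <;>
      first | linear_combination hc | ring
  · intro j hj
    have h00 : H.mulVec ![a₀, b₀] 0 = μ := by
      simp [hHdef, Matrix.mulVec, dotProduct, Fin.sum_univ_two]
      rw [hcdef]; field_simp; ring
    have h01 : H.mulVec ![a₀, b₀] 1 = μ := by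
      simp [hHdef, Matrix.mulVec, dotProduct, Fin.sum_univ_two]
      rw [hcdef]; field_simp; ring
    have h10 : H.mulVec ![a₁, b₁] 0 = k * μ := by
      simp [hHdef, Matrix.mulVec, dotProduct, Fin.sum_univ_two]
      rw [hk1, hk2, hcdef]; field_simp; ring
    have h11 : H.mulVec ![a₁, b₁] 1 = -(k * μ) := by
      simp [hHdef, Matrix.mulVec, dotProduct, Fin.sum_univ_two]
      rw [hk1, hk2, hcdef]; field_simp; ring
    rw [h00, h01, h10, h11]
    have hnj : n - j + j = n := Nat.sub_add_cancel hj
    have e1 : μ ^ (n - j) * μ ^ j = μ ^ n := by rw [← pow_add, hnj]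
    have e2 : (k * μ) ^ (n - j) * (-(k * μ)) ^ j = (-1) ^ j * (k ^ n * μ ^ n) := by
      calc (k * μ) ^ (n - j) * (-(k * μ)) ^ j
          = (-1) ^ j * ((k * μ) ^ (n - j) * (k * μ) ^ j) := by rw [neg_pow]; ring
        _ = (-1) ^ j * (k * μ) ^ n := by rw [← pow_add, hnj]
        _ = (-1) ^ j * (k ^ n * μ ^ n) := by rw [mul_pow]
    rw [e1, e2]; ring
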